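/- Let S, P_A, P_B be unital complex algebras, σ_A, σ_B linear functionals on P_A, P_B with σ_A(1) = σ_B(1) = 1, and Θ_A, Θ_B unital algebra automorphisms of S⊗P_A and S⊗P_B, with extensions Θ̂_A, Θ̂_B to automorphisms of S⊗P_A⊗P_B (Θ̂_A acting on the first and second tensor factors, Θ̂_B on the first and third). If Θ̂_A ∘ Θ̂_B = Θ̂_B ∘ Θ̂_A, then the non-selective update maps commute: for every linear functional ω on S, J_A(J_B(ω)) = J_B(J_A(ω)), where J_X(φ)(C) := (φ⊗σ_X)(Θ_X(C⊗1)) for X ∈ {A, B}. In particular, when the two coupling zones are spacelike separated, so that both causal orders are admissible and causal factorisation yields the commutation hypothesis, the combined state update is independent of the choice of causal order. -/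

import Mathlib

open scoped TensorProduct

noncomputable section

variable {S PA PB : Type*} [Ring S] [Algebra ℂ S]
  [Ring PA] [Algebra ℂ PA] [Ring PB] [Algebra ℂ PB]

/-- The tensor product `ω ⊗ σ` of two linear functionals, determined by
`(ω ⊗ σ)(a ⊗ b) = ω a * σ b`. -/
def tensorFunctional {A B : Type*} [Ring A] [Algebra ℂ A]
    [Ring B] [Algebra ℂ B] (ω : A →ₗ[ℂ] ℂ) (σ : B →ₗ[ℂ] ℂ) :
    A ⊗[ℂ] B →ₗ[ℂ] ℂ :=
  (TensorProduct.lid ℂ ℂ).toLinearMap.comp (TensorProduct.map ω σ)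

/-- The partial trace `id_S ⊗ σ : S ⊗ P →ₗ S`, determined by `a ⊗ b ↦ σ(b) • a`. -/
def idTensorFunctional (S : Type*) [Ring S] [Algebra ℂ S] {P : Type*}
    [Ring P] [Algebra ℂ P] (σ : P →ₗ[ℂ] ℂ) : S ⊗[ℂ] P →ₗ[ℂ] S :=
  (TensorProduct.rid ℂ S).toLinearMap.comp (TensorProduct.map LinearMap.id σ)

/-- The rearrangement isomorphism `(S ⊗ P_A) ⊗ P_B ≃ (S ⊗ P_B) ⊗ P_A`
exchanging the two probe factors. -/
def probeSwap (S PA PB : Type*) [Ring S] [Algebra ℂ S]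
    [Ring PA] [Algebra ℂ PA] [Ring PB] [Algebra ℂ PB] :
    ((S ⊗[ℂ] PA) ⊗[ℂ] PB) ≃ₐ[ℂ] ((S ⊗[ℂ] PB) ⊗[ℂ] PA) :=
  (Algebra.TensorProduct.assoc ℂ ℂ ℂ S PA PB).trans
    ((Algebra.TensorProduct.congr AlgEquiv.refl
        (Algebra.TensorProduct.comm ℂ PA PB)).trans
      (Algebra.TensorProduct.assoc ℂ ℂ ℂ S PB PA).symm)

/-- The extension `Θ̂_A` of an automorphism `Θ_A` of `S ⊗ P_A` to
`(S ⊗ P_A) ⊗ P_B`, acting trivially on `P_B`. -/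
def hatA (ΘA : (S ⊗[ℂ] PA) ≃ₐ[ℂ] (S ⊗[ℂ] PA)) :
    ((S ⊗[ℂ] PA) ⊗[ℂ] PB) ≃ₐ[ℂ] ((S ⊗[ℂ] PA) ⊗[ℂ] PB) :=
  Algebra.TensorProduct.congr ΘA AlgEquiv.refl

/-- The extension `Θ̂_B` of an automorphism `Θ_B` of `S ⊗ P_B` to
`(S ⊗ P_A) ⊗ P_B`, acting on the first and third tensor factors and trivially
on `P_A`. -/
def hatB (ΘB : (S ⊗[ℂ] PB) ≃ₐ[ℂ] (S ⊗[ℂ] PB)) :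
    ((S ⊗[ℂ] PA) ⊗[ℂ] PB) ≃ₐ[ℂ] ((S ⊗[ℂ] PA) ⊗[ℂ] PB) :=
  (probeSwap S PA PB).trans ((Algebra.TensorProduct.congr ΘB AlgEquiv.refl).trans
    (probeSwap S PA PB).symm)

/-- The induced system observable `ε(O) = (id_S ⊗ σ)(Θ (1 ⊗ O))` of a probe
observable `O`. -/
def inducedObservable {P : Type*} [Ring P] [Algebra ℂ P] (σ : P →ₗ[ℂ] ℂ)
    (Θ : (S ⊗[ℂ] P) ≃ₐ[ℂ] (S ⊗[ℂ] P)) (O : P) : S :=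
  idTensorFunctional S σ (Θ ((1 : S) ⊗ₜ[ℂ] O))

/-- The non-selective state-update map `J(φ) : C ↦ (φ ⊗ σ)(Θ (C ⊗ 1))`. -/
def updateMap {P : Type*} [Ring P] [Algebra ℂ P] (σ : P →ₗ[ℂ] ℂ)
    (Θ : (S ⊗[ℂ] P) ≃ₐ[ℂ] (S ⊗[ℂ] P)) (φ : S →ₗ[ℂ] ℂ) : S →ₗ[ℂ] ℂ :=
  (tensorFunctional φ σ).comp (Θ.toLinearMap.comp ((TensorProduct.mk ℂ S P).flip (1 : P)))

lemma tensorFunctional_tmul {A B : Type*} [Ring A] [Algebra ℂ A]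
    [Ring B] [Algebra ℂ B] (ω : A →ₗ[ℂ] ℂ) (σ : B →ₗ[ℂ] ℂ) (a : A) (b : B) :
    tensorFunctional ω σ (a ⊗ₜ[ℂ] b) = ω a * σ b := by
  simp [tensorFunctional]

lemma probeSwap_tmul (s : S) (p : PA) (q : PB) :
    probeSwap S PA PB ((s ⊗ₜ[ℂ] p) ⊗ₜ[ℂ] q) = (s ⊗ₜ[ℂ] q) ⊗ₜ[ℂ] p := by
  simp [probeSwap]

lemma probeSwap_symm_tmul (s : S) (q : PB) (p : PA) :
    (probeSwap S PA PB).symm ((s ⊗ₜ[ℂ] q) ⊗ₜ[ℂ] p) = (s ⊗ₜ[ℂ] p) ⊗ₜ[ℂ] q := by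
  apply (probeSwap S PA PB).injective
  simp [probeSwap_tmul]

lemma updateMap_apply {P : Type*} [Ring P] [Algebra ℂ P] (σ : P →ₗ[ℂ] ℂ)
    (Θ : (S ⊗[ℂ] P) ≃ₐ[ℂ] (S ⊗[ℂ] P)) (φ : S →ₗ[ℂ] ℂ) (C : S) :
    updateMap σ Θ φ C = tensorFunctional φ σ (Θ (C ⊗ₜ[ℂ] (1 : P))) := rfl

section Aux

variable (ω : S →ₗ[ℂ] ℂ) (σA : PA →ₗ[ℂ] ℂ) (σB : PB →ₗ[ℂ] ℂ)

local notation "Φ" => tensorFunctional (tensorFunctional ω σA) σB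

lemma aux_A (p : PA) (w : S ⊗[ℂ] PB) :
    Φ ((probeSwap S PA PB).symm (w ⊗ₜ[ℂ] p)) = σA p * tensorFunctional ω σB w := by
  induction w using TensorProduct.induction_on with
  | zero => simp
  | tmul u v =>
      rw [probeSwap_symm_tmul, tensorFunctional_tmul, tensorFunctional_tmul,
        tensorFunctional_tmul]
      ring
  | add x y hx hy =>
      rw [TensorProduct.add_tmul, map_add, map_add, map_add, hx, hy]; ring

lemma aux_B (v : PB) (z : S ⊗[ℂ] PA) :
    Φ (z ⊗ₜ[ℂ] v) = σB v * tensorFunctional ω σA z := by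
  induction z using TensorProduct.induction_on with
  | zero => simp
  | tmul s p =>
      simp only [tensorFunctional_tmul]; ring
  | add x y hx hy =>
      rw [TensorProduct.add_tmul, map_add, map_add, hx, hy]; ring

lemma aux_G (ΘB : (S ⊗[ℂ] PB) ≃ₐ[ℂ] (S ⊗[ℂ] PB)) (z : S ⊗[ℂ] PA) :
    Φ (hatB ΘB (z ⊗ₜ[ℂ] (1 : PB)))
      = tensorFunctional (updateMap σB ΘB ω) σA z := by
  induction z using TensorProduct.induction_on with
  | zero => simp [TensorProduct.zero_tmul]
  | tmul s p =>
      have h1 : hatB (PA := PA) ΘB ((s ⊗ₜ[ℂ] p) ⊗ₜ[ℂ] (1 : PB))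
          = (probeSwap S PA PB).symm ((ΘB (s ⊗ₜ[ℂ] (1 : PB))) ⊗ₜ[ℂ] p) := by
        simp [hatB, probeSwap_tmul]
      rw [h1, aux_A, tensorFunctional_tmul, updateMap_apply]; ring
  | add x y hx hy =>
      rw [TensorProduct.add_tmul, map_add, map_add, map_add, hx, hy]

lemma aux_G' (ΘA : (S ⊗[ℂ] PA) ≃ₐ[ℂ] (S ⊗[ℂ] PA)) (w : S ⊗[ℂ] PB) :
    Φ (hatA ΘA ((probeSwap S PA PB).symm (w ⊗ₜ[ℂ] (1 : PA))))
      = tensorFunctional (updateMap σA ΘA ω) σB w := by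
  induction w using TensorProduct.induction_on with
  | zero => simp [TensorProduct.zero_tmul]
  | tmul u v =>
      rw [probeSwap_symm_tmul]
      have h1 : hatA (PB := PB) ΘA ((u ⊗ₜ[ℂ] (1 : PA)) ⊗ₜ[ℂ] v)
          = (ΘA (u ⊗ₜ[ℂ] (1 : PA))) ⊗ₜ[ℂ] v := by
        simp [hatA]
      rw [h1, aux_B, tensorFunctional_tmul, updateMap_apply]; ring
  | add x y hx hy =>
      rw [TensorProduct.add_tmul, map_add, map_add, map_add, hx, hy, map_add]

end Aux

/-- If the extended scattering maps `Θ̂_A` and `Θ̂_B` on `S ⊗ P_A ⊗ P_B`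
commute (causal factorisation for spacelike separated coupling zones), then
the non-selective state-update maps commute: `J_A(J_B(ω)) = J_B(J_A(ω))` for
every linear functional `ω` on `S`.  Hence the combined state update is
independent of the choice of admissible causal order. -/
theorem update_maps_commute
    (σA : PA →ₗ[ℂ] ℂ) (σB : PB →ₗ[ℂ] ℂ) (hσA : σA 1 = 1) (hσB : σB 1 = 1)
    (ΘA : (S ⊗[ℂ] PA) ≃ₐ[ℂ] (S ⊗[ℂ] PA)) (ΘB : (S ⊗[ℂ] PB) ≃ₐ[ℂ] (S ⊗[ℂ] PB))
    (hcomm : ∀ x : (S ⊗[ℂ] PA) ⊗[ℂ] PB,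
      (hatA ΘA) ((hatB ΘB) x) = (hatB ΘB) ((hatA ΘA) x))
    (ω : S →ₗ[ℂ] ℂ) :
    updateMap σA ΘA (updateMap σB ΘB ω) = updateMap σB ΘB (updateMap σA ΘA ω) := by
  ext C
  have hA1 : hatA (PB := PB) ΘA ((C ⊗ₜ[ℂ] (1 : PA)) ⊗ₜ[ℂ] (1 : PB))
      = (ΘA (C ⊗ₜ[ℂ] (1 : PA))) ⊗ₜ[ℂ] (1 : PB) := by
    simp [hatA]
  have hB1 : hatB (PA := PA) ΘB ((C ⊗ₜ[ℂ] (1 : PA)) ⊗ₜ[ℂ] (1 : PB))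
      = (probeSwap S PA PB).symm ((ΘB (C ⊗ₜ[ℂ] (1 : PB))) ⊗ₜ[ℂ] (1 : PA)) := by
    simp [hatB, probeSwap_tmul]
  calc updateMap σA ΘA (updateMap σB ΘB ω) C
      = tensorFunctional (updateMap σB ΘB ω) σA (ΘA (C ⊗ₜ[ℂ] (1 : PA))) := rfl
    _ = tensorFunctional (tensorFunctional ω σA) σB
          (hatB ΘB (hatA ΘA ((C ⊗ₜ[ℂ] (1 : PA)) ⊗ₜ[ℂ] (1 : PB)))) := by
        rw [hA1, aux_G]
    _ = tensorFunctional (tensorFunctional ω σA) σB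
          (hatA ΘA (hatB ΘB ((C ⊗ₜ[ℂ] (1 : PA)) ⊗ₜ[ℂ] (1 : PB)))) := by
        rw [hcomm]
    _ = tensorFunctional (updateMap σA ΘA ω) σB (ΘB (C ⊗ₜ[ℂ] (1 : PB))) := by
        rw [hB1, aux_G']
    _ = updateMap σB ΘB (updateMap σA ΘA ω) C := rfl

end
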